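/- Let d ≥ 1, let a₁,…,a_d ∈ ℂ, and define f(z) = z + a₁/z + a₂/z² + ⋯ + a_d/z^d for z ∈ 𝔻* = {z ∈ ℂ : |z| > 1}. If f is injective on 𝔻*, then d·|a_d| ≤ 1. -/

import Mathlib

open Set Filter

noncomputable section

/-- The unit circle in `ℂ`. -/
def S1 : Set ℂ := {z : ℂ | ‖z‖ = 1}

/-- The parametrization `x ↦ e^{2πix}` of the unit circle. -/
noncomputable def expMap (x : ℝ) : ℂ := Complex.exp (2 * Real.pi * Complex.I * x)

/-- The closed positively oriented arc from `a` to `b` on the unit circle. -/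
def closedArc (a b : ℂ) : Set ℂ :=
  {z : ℂ | ∃ s t u : ℝ, a = expMap s ∧ z = expMap t ∧ b = expMap u ∧
    s ≤ t ∧ t ≤ u ∧ u < s + 1}

/-- The open positively oriented arc from `a` to `b` on the unit circle. -/
def openArc (a b : ℂ) : Set ℂ :=
  {z : ℂ | ∃ s t u : ℝ, a = expMap s ∧ z = expMap t ∧ b = expMap u ∧
    s < t ∧ t < u ∧ u < s + 1}

/-- `f` restricted to the unit circle is a covering of signed degree `d`:
it lifts under `x ↦ e^{2πix}` to a continuous map `F` with `F (x+1) = F x + d`.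
`d > 0` corresponds to an orientation-preserving covering of degree `d`, and
`d < 0` to an orientation-reversing covering of degree `|d|`. -/
def IsCircleCovering (f : ℂ → ℂ) (d : ℤ) : Prop :=
  ∃ F : ℝ → ℝ, Continuous F ∧ (∀ x : ℝ, f (expMap x) = expMap (F x)) ∧
    ∀ x : ℝ, F (x + 1) = F x + d

/-- The iterate `f^[m]` is an orientation-preserving circle covering. -/
def OrientPresIter (f : ℂ → ℂ) (m : ℕ) : Prop :=
  ∃ e : ℤ, 0 < e ∧ IsCircleCovering (f^[m]) e

/-- The iterate `f^[m]` is an orientation-reversing circle covering. -/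
def OrientRevIter (f : ℂ → ℂ) (m : ℕ) : Prop :=
  ∃ e : ℤ, e < 0 ∧ IsCircleCovering (f^[m]) e

/-- Expansivity of `f` on the unit circle. -/
def ExpansiveOn (f : ℂ → ℂ) : Prop :=
  ∃ δ : ℝ, 0 < δ ∧ ∀ a ∈ S1, ∀ b ∈ S1, a ≠ b →
    ∃ n : ℕ, δ < ‖f^[n] a - f^[n] b‖

/-- `h` is an orientation-preserving homeomorphism of the unit circle:
it lifts to a continuous strictly increasing map `H : ℝ → ℝ` commuting with `x ↦ x + 1`. -/
def OPCircleHomeo (h : ℂ → ℂ) : Prop :=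
  ∃ H : ℝ → ℝ, Continuous H ∧ StrictMono H ∧ (∀ x : ℝ, H (x + 1) = H x + 1) ∧
    ∀ x : ℝ, h (expMap x) = expMap (H x)

/-- A Markov partition `P(f; {a₀, …, a_r})` for a circle covering `f`. -/
structure MarkovPartition (f : ℂ → ℂ) (r : ℕ) (a : Fin (r + 1) → ℂ) : Prop where
  rpos : 1 ≤ r
  /-- The points `a₀, …, a_r` lie on the unit circle in positive cyclic order. -/
  cyclic : ∃ x : Fin (r + 1) → ℝ, StrictMono x ∧ (∀ k, a k = expMap (x k)) ∧
    x (Fin.last r) < x 0 + 1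
  /-- The closed arcs `A_k = [a_k, a_{k+1}]` cover the circle. -/
  cover : S1 ⊆ ⋃ k, closedArc (a k) (a (k + 1))
  /-- The arcs have pairwise disjoint interiors. -/
  disjInt : ∀ k j : Fin (r + 1), k ≠ j →
    openArc (a k) (a (k + 1)) ∩ openArc (a j) (a (j + 1)) = ∅
  /-- `f` is injective on each open arc. -/
  injOn : ∀ k, Set.InjOn f (openArc (a k) (a (k + 1)))
  /-- The Markov property. -/
  markov : ∀ k j : Fin (r + 1),
    (f '' openArc (a k) (a (k + 1)) ∩ openArc (a j) (a (j + 1))).Nonempty →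
    openArc (a j) (a (j + 1)) ⊆ f '' openArc (a k) (a (k + 1))
  /-- The set `{a₀, …, a_r}` is forward invariant. -/
  invariant : ∀ k, ∃ j, f (a k) = a j

/-- Condition (uv): piecewise conformal extensions on open sets `U_k`, `V_k` with
`⋃ {U_j : A_j ⊆ f(A_k)} ⊆ V_k`. -/
def CondUV (f : ℂ → ℂ) (r : ℕ) (a : Fin (r + 1) → ℂ) : Prop :=
  ∃ (U V : Fin (r + 1) → Set ℂ) (fk : Fin (r + 1) → ℂ → ℂ),
    (∀ k, IsOpen (U k)) ∧ (∀ k, IsOpen (V k)) ∧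
    (∀ k, openArc (a k) (a (k + 1)) ⊆ U k) ∧
    (∀ k, f '' openArc (a k) (a (k + 1)) ⊆ V k) ∧
    (∀ k, Set.InjOn (fk k) (U k)) ∧
    (∀ k, DifferentiableOn ℂ (fk k) (U k)) ∧
    (∀ k, fk k '' U k = V k) ∧
    (∀ k, Set.EqOn (fk k) f (openArc (a k) (a (k + 1)))) ∧
    (∀ k j, openArc (a j) (a (j + 1)) ⊆ f '' openArc (a k) (a (k + 1)) → U j ⊆ V k)

/-- Condition (hol): the restriction of `f` to each closed arc of the partition extends
holomorphically to a neighborhood of either endpoint. -/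
def CondHol (f : ℂ → ℂ) (r : ℕ) (a : Fin (r + 1) → ℂ) : Prop :=
  ∀ k : Fin (r + 1),
    (∃ W : Set ℂ, IsOpen W ∧ a k ∈ W ∧ ∃ g : ℂ → ℂ, DifferentiableOn ℂ g W ∧
      Set.EqOn g f (W ∩ closedArc (a k) (a (k + 1)))) ∧
    (∃ W : Set ℂ, IsOpen W ∧ a (k + 1) ∈ W ∧ ∃ g : ℂ → ℂ, DifferentiableOn ℂ g W ∧
      Set.EqOn g f (W ∩ closedArc (a k) (a (k + 1))))

/-- `q` is the orientation-preserving period of the periodic point `a`: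
the least `n ≥ 1` with `f^[n] a = a` and `f^[n]` orientation-preserving. -/
def OPPeriod (f : ℂ → ℂ) (a : ℂ) (q : ℕ) : Prop :=
  0 < q ∧ f^[q] a = a ∧ OrientPresIter f q ∧
    ∀ m : ℕ, 0 < m → m < q → ¬(f^[m] a = a ∧ OrientPresIter f m)

/-- The one-sided multiplier `λ(a⁺)` of the first return map `f^[q]` exists and equals `lam`. -/
def HasMultiplierPlus (f : ℂ → ℂ) (a : ℂ) (q : ℕ) (lam : ℝ) : Prop :=
  0 ≤ lam ∧ ∃ z₀ ∈ S1, z₀ ≠ a ∧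
    Filter.Tendsto (fun z : ℂ => (f^[q] z - a) / (z - a))
      (nhdsWithin a (openArc a z₀)) (nhds (lam : ℂ))

/-- The one-sided multiplier `λ(a⁻)` of the first return map `f^[q]` exists and equals `lam`. -/
def HasMultiplierMinus (f : ℂ → ℂ) (a : ℂ) (q : ℕ) (lam : ℝ) : Prop :=
  0 ≤ lam ∧ ∃ z₀ ∈ S1, z₀ ≠ a ∧
    Filter.Tendsto (fun z : ℂ => (f^[q] z - a) / (z - a))
      (nhdsWithin a (openArc z₀ a)) (nhds (lam : ℂ))

/-- `a` is an isolated fixed point (on the circle) of the return map `f^[q]`. -/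
def IsolatedFixedPt (f : ℂ → ℂ) (a : ℂ) (q : ℕ) : Prop :=
  ∃ ε : ℝ, 0 < ε ∧ ∀ z ∈ S1, z ≠ a → ‖z - a‖ < ε → f^[q] z ≠ z

/-- The return map `f^[q]` has, on the positive side of `a`, a holomorphic extension
with Taylor expansion `z + c (z - a)^(N+1) + O((z - a)^(N+2))`, `c ≠ 0`;
i.e. the parabolic point `a⁺` has `N(a⁺) = N`. -/
def TaylorPlus (f : ℂ → ℂ) (a : ℂ) (q : ℕ) (N : ℕ) : Prop :=
  0 < N ∧ ∃ z₁ ∈ S1, z₁ ≠ a ∧ ∃ W : Set ℂ, IsOpen W ∧ closedArc a z₁ ⊆ W ∧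
    ∃ g : ℂ → ℂ, DifferentiableOn ℂ g W ∧ Set.EqOn g (f^[q]) (closedArc a z₁) ∧
      ∃ c : ℂ, c ≠ 0 ∧
        Asymptotics.IsBigO (nhds a)
          (fun z : ℂ => g z - z - c * (z - a) ^ (N + 1))
          (fun z : ℂ => (z - a) ^ (N + 2))

/-- Negative-side version of `TaylorPlus`: the parabolic point `a⁻` has `N(a⁻) = N`. -/
def TaylorMinus (f : ℂ → ℂ) (a : ℂ) (q : ℕ) (N : ℕ) : Prop :=
  0 < N ∧ ∃ z₁ ∈ S1, z₁ ≠ a ∧ ∃ W : Set ℂ, IsOpen W ∧ closedArc z₁ a ⊆ W ∧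
    ∃ g : ℂ → ℂ, DifferentiableOn ℂ g W ∧ Set.EqOn g (f^[q]) (closedArc z₁ a) ∧
      ∃ c : ℂ, c ≠ 0 ∧
        Asymptotics.IsBigO (nhds a)
          (fun z : ℂ => g z - z - c * (z - a) ^ (N + 1))
          (fun z : ℂ => (z - a) ^ (N + 2))

/-- No iterate `f^[m'] a` with `m' < m` is a periodic point; used to express that
`m` is the minimal integer with `f^[m] a` periodic. -/
def MinPreperiod (f : ℂ → ℂ) (a : ℂ) (m : ℕ) : Prop :=
  ∀ m' : ℕ, m' < m → ¬ ∃ n : ℕ, 0 < n ∧ f^[n] (f^[m'] a) = f^[m'] a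

/-- `q` is the orientation-preserving period of the (pre)periodic point `a`. -/
def PrePeriodOf (f : ℂ → ℂ) (a : ℂ) (q : ℕ) : Prop :=
  ∃ m : ℕ, MinPreperiod f a m ∧ OPPeriod f (f^[m] a) q

/-- `a⁺` is hyperbolic with multiplier `lam > 1` (for preperiodic `a`, the multiplier is
taken at the periodic point on the orbit, with sides swapped if the connecting iterate
is orientation-reversing). -/
def SideHypPlus (f : ℂ → ℂ) (a : ℂ) (lam : ℝ) : Prop :=
  1 < lam ∧ ∃ m q : ℕ, MinPreperiod f a m ∧ OPPeriod f (f^[m] a) q ∧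
    ((OrientPresIter f m ∧ HasMultiplierPlus f (f^[m] a) q lam) ∨
     (OrientRevIter f m ∧ HasMultiplierMinus f (f^[m] a) q lam))

/-- `a⁻` is hyperbolic with multiplier `lam > 1`. -/
def SideHypMinus (f : ℂ → ℂ) (a : ℂ) (lam : ℝ) : Prop :=
  1 < lam ∧ ∃ m q : ℕ, MinPreperiod f a m ∧ OPPeriod f (f^[m] a) q ∧
    ((OrientPresIter f m ∧ HasMultiplierMinus f (f^[m] a) q lam) ∨
     (OrientRevIter f m ∧ HasMultiplierPlus f (f^[m] a) q lam))

/-- `a⁺` is parabolic: the one-sided multiplier equals `1` and the relevant periodic point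
is an isolated fixed point of its first return map. -/
def SideParPlus (f : ℂ → ℂ) (a : ℂ) : Prop :=
  ∃ m q : ℕ, MinPreperiod f a m ∧ OPPeriod f (f^[m] a) q ∧
    IsolatedFixedPt f (f^[m] a) q ∧
    ((OrientPresIter f m ∧ HasMultiplierPlus f (f^[m] a) q 1) ∨
     (OrientRevIter f m ∧ HasMultiplierMinus f (f^[m] a) q 1))

/-- `a⁻` is parabolic. -/
def SideParMinus (f : ℂ → ℂ) (a : ℂ) : Prop :=
  ∃ m q : ℕ, MinPreperiod f a m ∧ OPPeriod f (f^[m] a) q ∧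
    IsolatedFixedPt f (f^[m] a) q ∧
    ((OrientPresIter f m ∧ HasMultiplierMinus f (f^[m] a) q 1) ∨
     (OrientRevIter f m ∧ HasMultiplierPlus f (f^[m] a) q 1))

/-- `a⁺` is parabolic with multiplicity data `N(a⁺) = N`. -/
def SideParPlusN (f : ℂ → ℂ) (a : ℂ) (N : ℕ) : Prop :=
  ∃ m q : ℕ, MinPreperiod f a m ∧ OPPeriod f (f^[m] a) q ∧
    IsolatedFixedPt f (f^[m] a) q ∧
    ((OrientPresIter f m ∧ HasMultiplierPlus f (f^[m] a) q 1 ∧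
        TaylorPlus f (f^[m] a) q N) ∨
     (OrientRevIter f m ∧ HasMultiplierMinus f (f^[m] a) q 1 ∧
        TaylorMinus f (f^[m] a) q N))

/-- `a⁻` is parabolic with multiplicity data `N(a⁻) = N`. -/
def SideParMinusN (f : ℂ → ℂ) (a : ℂ) (N : ℕ) : Prop :=
  ∃ m q : ℕ, MinPreperiod f a m ∧ OPPeriod f (f^[m] a) q ∧
    IsolatedFixedPt f (f^[m] a) q ∧
    ((OrientPresIter f m ∧ HasMultiplierMinus f (f^[m] a) q 1 ∧
        TaylorMinus f (f^[m] a) q N) ∨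
     (OrientRevIter f m ∧ HasMultiplierPlus f (f^[m] a) q 1 ∧
        TaylorPlus f (f^[m] a) q N))

/-- `a` is symmetrically hyperbolic: `λ(a⁺) = λ(a⁻) > 1`. -/
def SymmHyperbolic (f : ℂ → ℂ) (a : ℂ) : Prop :=
  ∃ lam : ℝ, SideHypPlus f a lam ∧ SideHypMinus f a lam

/-- `a` is symmetrically parabolic: both sides parabolic with `N(a⁺) = N(a⁻)`. -/
def SymmParabolic (f : ℂ → ℂ) (a : ℂ) : Prop :=
  ∃ N : ℕ, SideParPlusN f a N ∧ SideParMinusN f a N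

/-- The distortion function `ρ_h(z, t)` of a circle homeomorphism `h`. -/
noncomputable def distortionAt (h : ℂ → ℂ) (z : ℂ) (t : ℝ) : ℝ :=
  max (‖h (expMap t * z) - h z‖ / ‖h (expMap (-t) * z) - h z‖)
      (‖h (expMap (-t) * z) - h z‖ / ‖h (expMap t * z) - h z‖)

/-- Condition (H/P→H/P): there is `μ > 0` matching parabolic sides of `a` to parabolic sides
of `b` with `N(a^±) = μ · N(b^±)`, and hyperbolic sides to hyperbolic sides with
`λ(b^±) = λ(a^±)^μ`. -/
def CondHH (f g : ℂ → ℂ) (a b : ℂ) : Prop :=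
  ∃ μ : ℝ, 0 < μ ∧
    (∀ N : ℕ, SideParPlusN f a N → ∃ N' : ℕ, SideParPlusN g b N' ∧ (N : ℝ) = μ * N') ∧
    (∀ N : ℕ, SideParMinusN f a N → ∃ N' : ℕ, SideParMinusN g b N' ∧ (N : ℝ) = μ * N') ∧
    (∀ lam : ℝ, SideHypPlus f a lam → SideHypPlus g b (lam ^ μ)) ∧
    (∀ lam : ℝ, SideHypMinus f a lam → SideHypMinus g b (lam ^ μ))

/-- Condition (H→P): `a⁺` and `a⁻` are hyperbolic and `b` is symmetrically parabolic. -/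
def CondHP (f g : ℂ → ℂ) (a b : ℂ) : Prop :=
  (∃ lam : ℝ, SideHypPlus f a lam) ∧ (∃ lam : ℝ, SideHypMinus f a lam) ∧ SymmParabolic g b

/-- The set `F_n = (f^[n-1])⁻¹({a₀, …, a_r}) ∩ S¹`. -/
def Fset (f : ℂ → ℂ) {r : ℕ} (a : Fin (r + 1) → ℂ) (n : ℕ) : Set ℂ :=
  {z : ℂ | z ∈ S1 ∧ f^[n - 1] z ∈ Set.range a}

/-- `A` is a complementary arc of `F_n`: the closure of a connected component
of `S¹ ∖ F_n`. -/
def IsComplArc (f : ℂ → ℂ) {r : ℕ} (a : Fin (r + 1) → ℂ) (n : ℕ) (A : Set ℂ) : Prop :=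
  ∃ z ∈ S1 \ Fset f a n, A = closure (connectedComponentIn (S1 \ Fset f a n) z)

/-- `φ` has relative distortion bounded by `M` on `X`. -/
def RelDistBdd (φ : ℂ → ℂ) (X : Set ℂ) (M : ℝ) : Prop :=
  ∀ A B : Set ℂ, A ⊆ X → B ⊆ X → 0 < Metric.diam B → 0 < Metric.diam (φ '' B) →
    M⁻¹ * (Metric.diam A / Metric.diam B) ≤ Metric.diam (φ '' A) / Metric.diam (φ '' B) ∧
    Metric.diam (φ '' A) / Metric.diam (φ '' B) ≤ M * (Metric.diam A / Metric.diam B)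

/-- `J` is a Jordan curve in `ℂ`. -/
def JordanCurve (J : Set ℂ) : Prop :=
  ∃ γ : ℂ → ℂ, ContinuousOn γ S1 ∧ Set.InjOn γ S1 ∧ γ '' S1 = J

/-- `J` is a welding curve for the circle homeomorphism `h`. -/
def IsWeldingPair (h : ℂ → ℂ) (J : Set ℂ) : Prop :=
  JordanCurve J ∧
  ∃ U V : Set ℂ, IsOpen U ∧ IsOpen V ∧ IsConnected U ∧ IsConnected V ∧
    Bornology.IsBounded U ∧ ¬ Bornology.IsBounded V ∧ Disjoint U V ∧
    U ∪ V = {z : ℂ | z ∉ J} ∧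
    ∃ H₁ H₂ : ℂ → ℂ,
      ContinuousOn H₁ (Metric.closedBall 0 1) ∧
      Set.InjOn H₁ (Metric.closedBall 0 1) ∧
      DifferentiableOn ℂ H₁ (Metric.ball 0 1) ∧
      H₁ '' Metric.ball 0 1 = U ∧
      H₁ '' Metric.closedBall 0 1 = U ∪ J ∧
      ContinuousOn H₂ {z : ℂ | 1 ≤ ‖z‖} ∧
      Set.InjOn H₂ {z : ℂ | 1 ≤ ‖z‖} ∧
      DifferentiableOn ℂ H₂ {z : ℂ | 1 < ‖z‖} ∧
      H₂ '' {z : ℂ | 1 < ‖z‖} = V ∧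
      H₂ '' {z : ℂ | 1 ≤ ‖z‖} = V ∪ J ∧
      Filter.Tendsto (fun z : ℂ => ‖H₂ z‖)
        (Filter.comap norm Filter.atTop) Filter.atTop ∧
      ∀ z ∈ S1, H₂ (h z) = H₁ z

/-- `h` is a welding homeomorphism. -/
def IsWeldingHomeo (h : ℂ → ℂ) : Prop := ∃ J : Set ℂ, IsWeldingPair h J

/-- `J'` is the image of `J` under a Möbius transformation (whose pole avoids `J`). -/
def MoebiusEquivCurves (J J' : Set ℂ) : Prop :=
  ∃ p q u v : ℂ, p * v - q * u ≠ 0 ∧ (∀ z ∈ J, u * z + v ≠ 0) ∧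
    J' = (fun z : ℂ => (p * z + q) / (u * z + v)) '' J

/-- The inversion (anti-conformal reflection) in the circle with center `c` and radius `ρ`. -/
noncomputable def circleInv (c : ℂ) (ρ : ℝ) (z : ℂ) : ℂ :=
  c + (ρ : ℂ) ^ 2 / ((starRingEnd ℂ) z - (starRingEnd ℂ) c)

end
section AuxAreaThm
open Complex Topology

lemma deriv_ne_zero_of_injOn' {g : ℂ → ℂ} {s : Set ℂ} (hs : IsOpen s)
    (hinj : Set.InjOn g s) (hg : DifferentiableOn ℂ g s) {z₀ : ℂ} (hz₀ : z₀ ∈ s) :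
    deriv g z₀ ≠ 0 := by
  intro hder
  have hnbhd : s ∈ 𝓝 z₀ := hs.mem_nhds hz₀
  have hAg : AnalyticAt ℂ g z₀ := hg.analyticAt hnbhd
  set h : ℂ → ℂ := fun z => g z - g z₀ with hhdef
  have hA : AnalyticAt ℂ h z₀ := hAg.sub analyticAt_const
  suffices H : ∃ z₁ ∈ s, ∃ z₂ ∈ s, z₁ ≠ z₂ ∧ g z₁ = g z₂ by
    obtain ⟨z₁, h1, z₂, h2, hne, heq⟩ := H
    exact hne (hinj h1 h2 heq)
  by_cases htop : ∀ᶠ z in 𝓝 z₀, h z = 0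
  · obtain ⟨r, hr, hball⟩ := Metric.eventually_nhds_iff_ball.mp
      (htop.and (hs.eventually_mem hz₀))
    refine ⟨z₀, hz₀, z₀ + r/2, ?_, ?_, ?_⟩
    · exact (hball (z₀ + r/2) (by simp [dist_eq, abs_of_pos, hr, half_lt_self])).2
    · intro he
      have : (r : ℂ) = 0 := by linear_combination -2*he
      simp at this; linarith
    · have := (hball (z₀ + r/2) (by simp [dist_eq, abs_of_pos, hr, half_lt_self])).1
      have h0 : g (z₀ + r/2) - g z₀ = 0 := this
      linear_combination -h0
  · -- finite order n
    have hne : analyticOrderAt h z₀ ≠ ⊤ := fun ht => htop (analyticOrderAt_eq_top.mp ht)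
    obtain ⟨n, hn⟩ := WithTop.ne_top_iff_exists.mp hne
    obtain ⟨u, hu, hu0, hhu⟩ := (hA.analyticOrderAt_eq_natCast).mp hn.symm
    -- n ≠ 0
    have hn0 : n ≠ 0 := by
      rintro rfl
      have := hhu.self_of_nhds
      simp [hhdef] at this
      exact hu0 this.symm
    -- n ≠ 1
    have hderh : HasDerivAt h 0 z₀ := by
      have : HasDerivAt g (deriv g z₀) z₀ :=
        ((hg.differentiableAt hnbhd)).hasDerivAt
      have h' := this.sub_const (g z₀)
      rw [hder] at h'
      exact h'
    have hn1 : n ≠ 1 := by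
      rintro rfl
      have hslope : Tendsto (slope h z₀) (𝓝[≠] z₀) (𝓝 0) :=
        hasDerivAt_iff_tendsto_slope.mp hderh
      have hueq : slope h z₀ =ᶠ[𝓝[≠] z₀] u := by
        filter_upwards [self_mem_nhdsWithin,
          nhdsWithin_le_nhds hhu] with z hz hz2
        have hz0 : h z₀ = 0 := by simp [hhdef]
        rw [slope_def_field, hz0, hz2]
        rw [sub_zero, pow_one, smul_eq_mul]
        exact mul_div_cancel_left₀ _ (sub_ne_zero.mpr hz)
      have h1 : Tendsto u (𝓝[≠] z₀) (𝓝 0) := hslope.congr' hueq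
      have h2 : Tendsto u (𝓝[≠] z₀) (𝓝 (u z₀)) :=
        (hu.continuousAt.continuousWithinAt).tendsto
      exact hu0 (tendsto_nhds_unique h2 h1)
    have hn2 : 2 ≤ n := by omega
    -- build an n-th root of u near z₀
    obtain ⟨c, hc⟩ := IsAlgClosed.exists_pow_nat_eq (u z₀) (show 0 < n by omega)
    have hc0 : c ≠ 0 := by
      rintro rfl
      exact hu0 (by simpa [zero_pow hn0] using hc.symm)
    set v : ℂ → ℂ := fun z => c * Complex.exp (Complex.log (u z / u z₀) / n) with hvdef
    have hv : AnalyticAt ℂ v z₀ := by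
      apply analyticAt_const.mul
      apply (analyticAt_cexp.comp ?_)
      apply AnalyticAt.div ?_ analyticAt_const (by exact_mod_cast Nat.cast_ne_zero.mpr hn0)
      apply analyticAt_clog ?_ |>.comp (hu.div analyticAt_const hu0)
      simp [div_self hu0, Complex.slitPlane]
    have hvz₀ : v z₀ ≠ 0 := by
      simp [hvdef, Complex.exp_ne_zero, hc0]
    have huv : ∀ᶠ z in 𝓝 z₀, v z ^ n = u z := by
      filter_upwards [hu.continuousAt.eventually_ne hu0] with z hz
      have hq : u z / u z₀ ≠ 0 := div_ne_zero hz hu0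
      calc v z ^ n = c ^ n * Complex.exp ((n : ℂ) * (Complex.log (u z / u z₀) / n)) := by
            rw [hvdef]; rw [mul_pow, ← Complex.exp_nat_mul]
        _ = u z₀ * (u z / u z₀) := by
            rw [hc, mul_div_cancel₀ _ (by exact_mod_cast Nat.cast_ne_zero.mpr hn0),
              Complex.exp_log hq]
        _ = u z := mul_div_cancel₀ _ hu0
    set φ : ℂ → ℂ := fun z => (z - z₀) * v z with hφdef
    have hφ : AnalyticAt ℂ φ z₀ := (analyticAt_id.sub analyticAt_const).mul hv
    have hφz₀ : φ z₀ = 0 := by simp [hφdef]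
    have hE : ∀ᶠ z in 𝓝 z₀, z ∈ s ∧ h z = φ z ^ n ∧ v z ≠ 0 := by
      filter_upwards [hs.eventually_mem hz₀, hhu, huv,
        hv.continuousAt.eventually_ne hvz₀] with z h1 h2 h3 h4
      refine ⟨h1, ?_, h4⟩
      rw [h2, smul_eq_mul, ← h3]
      exact (mul_pow _ _ _).symm
    rcases hφ.eventually_constant_or_nhds_le_map_nhds with hconst | hmap
    · exfalso
      have : ∀ᶠ z in 𝓝[≠] z₀, False := by
        filter_upwards [nhdsWithin_le_nhds (hconst.and hE), self_mem_nhdsWithin]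
          with z hz hz'
        have hz0 : (z - z₀) * v z = 0 := by
          have h5 : φ z = 0 := by rw [hz.1, hφz₀]
          exact h5
        rcases mul_eq_zero.mp hz0 with h' | h'
        · exact hz' (sub_eq_zero.mp h')
        · exact hz.2.2.2 h'
      obtain ⟨_, hf⟩ := this.exists
      exact hf
    · rw [hφz₀] at hmap
      have himg : φ '' {z | z ∈ s ∧ h z = φ z ^ n ∧ v z ≠ 0} ∈ 𝓝 (0 : ℂ) :=
        hmap (Filter.image_mem_map hE)
      obtain ⟨ε, hε, hball⟩ := Metric.mem_nhds_iff.mp himg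
      set ζ : ℂ := Complex.exp (((2 * Real.pi / n : ℝ) : ℂ) * Complex.I) with hζdef
      have hnC : (n : ℂ) ≠ 0 := Nat.cast_ne_zero.mpr hn0
      have hζn : ζ ^ n = 1 := by
        rw [hζdef, ← Complex.exp_nat_mul]
        have : (n : ℂ) * (((2 * Real.pi / n : ℝ) : ℂ) * Complex.I)
            = 2 * (Real.pi : ℂ) * Complex.I := by
          push_cast
          field_simp
        rw [this]
        simpa [mul_comm, mul_assoc] using Complex.exp_two_pi_mul_I
      have hζ1 : ζ ≠ 1 := by
        rw [hζdef]
        intro hh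
        obtain ⟨k, hk⟩ := Complex.exp_eq_one_iff.mp hh
        have him : (2 * Real.pi / n : ℝ) = k * (2 * Real.pi) := by
          have := congrArg Complex.im hk
          simpa using this
        have hkn : (1 : ℝ) = k * n := by
          have hnR : (n : ℝ) ≠ 0 := Nat.cast_ne_zero.mpr hn0
          have h8 := congrArg (fun x : ℝ => x * n) him
          rw [div_mul_cancel₀ _ hnR] at h8
          have h9 : (2*Real.pi) * (1:ℝ) = (2*Real.pi) * ((k:ℝ)*n) := by
            linear_combination h8
          have h10 := mul_left_cancel₀ (by positivity : (2*Real.pi) ≠ 0) h9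
          linarith
        have h1kn : (1 : ℤ) = k * n := by exact_mod_cast hkn
        have : (n : ℤ) ≤ 1 := Int.le_of_dvd one_pos ⟨k, by linarith [h1kn]⟩
        omega
      have habsζ : ‖ζ‖ = 1 := Complex.norm_exp_ofReal_mul_I _
      -- two points
      have hw1 : ((ε/2 : ℝ) : ℂ) ∈ Metric.ball (0:ℂ) ε := by
        simp only [Metric.mem_ball, dist_zero_right, Complex.norm_real, Real.norm_eq_abs]
        rw [_root_.abs_of_pos (by linarith : (0:ℝ) < ε/2)]
        linarith
      have hw2 : ζ * ((ε/2 : ℝ) : ℂ) ∈ Metric.ball (0:ℂ) ε := by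
        simp only [Metric.mem_ball, dist_zero_right, norm_mul, habsζ,
          one_mul, Complex.norm_real, Real.norm_eq_abs]
        rw [_root_.abs_of_pos (by linarith : (0:ℝ) < ε/2)]
        linarith
      obtain ⟨z₁, hz₁, hφ1⟩ := hball hw1
      obtain ⟨z₂, hz₂, hφ2⟩ := hball hw2
      have hwne : ((ε/2 : ℝ) : ℂ) ≠ ζ * ((ε/2 : ℝ) : ℂ) := by
        intro hh
        have hεne : ((ε/2 : ℝ) : ℂ) ≠ 0 := by
          simp only [ne_eq, Complex.ofReal_eq_zero]
          linarith
        have h6 : (1:ℂ) * ((ε/2 : ℝ) : ℂ) = ζ * ((ε/2 : ℝ) : ℂ) := by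
          rw [one_mul]; exact hh
        exact hζ1 (mul_right_cancel₀ hεne h6).symm
      refine ⟨z₁, hz₁.1, z₂, hz₂.1, ?_, ?_⟩
      · rintro rfl
        rw [hφ1] at hφ2
        exact hwne hφ2
      · have e1 : g z₁ - g z₀ = ((ε/2 : ℝ) : ℂ) ^ n := by
          have h5 := hz₁.2.1
          rw [hφ1] at h5
          exact h5
        have e2 : g z₂ - g z₀ = ((ε/2 : ℝ) : ℂ) ^ n := by
          have h5 := hz₂.2.1
          rw [hφ2] at h5
          have h6 : h z₂ = ((ε/2 : ℝ) : ℂ) ^ n := by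
            rw [h5, mul_pow, hζn, one_mul]
          exact h6
        linear_combination e1 - e2

lemma multiset_prod_le_one_aux (s : Multiset ℝ) (h : ∀ x ∈ s, 0 ≤ x ∧ x ≤ 1) :
    s.prod ≤ 1 := by
  induction s using Multiset.induction with
  | empty => simp
  | cons a t ih =>
    rw [Multiset.prod_cons]
    have ha := h a (Multiset.mem_cons_self a t)
    have ht : t.prod ≤ 1 := ih (fun x hx => h x (Multiset.mem_cons_of_mem hx))
    have htnn : 0 ≤ t.prod :=
      Multiset.prod_nonneg (fun x hx => (h x (Multiset.mem_cons_of_mem hx)).1)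
    nlinarith

end AuxAreaThm

/-- **Area-theorem coefficient bound.** If `f(z) = z + a₁/z + ⋯ + a_d/z^d` is injective
on the exterior disk `𝔻* = {|z| > 1}`, then `d·|a_d| ≤ 1`. -/
theorem last_coefficient_bound_of_univalent
    (d : ℕ) (hd : 1 ≤ d) (a : ℕ → ℂ)
    (hinj : Set.InjOn (fun z : ℂ => z + ∑ i ∈ Finset.Icc 1 d, a i / z ^ i)
      {z : ℂ | 1 < ‖z‖}) :
    (d : ℝ) * ‖a d‖ ≤ 1 := by
  set Ω : Set ℂ := {z : ℂ | 1 < ‖z‖} with hΩdef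
  have hΩ : IsOpen Ω := isOpen_lt continuous_const continuous_norm
  set g : ℂ → ℂ := fun z => z + ∑ i ∈ Finset.Icc 1 d, a i / z ^ i with hgdef
  have hD : ∀ z ∈ Ω, HasDerivAt g
      (1 - ∑ i ∈ Finset.Icc 1 d, (i:ℂ) * a i / z ^ (i+1)) z := by
    intro z hz
    have hz0 : z ≠ 0 := by
      intro h
      rw [hΩdef] at hz
      simp only [Set.mem_setOf_eq, h] at hz
      simp at hz
      linarith
    have h1 : HasDerivAt (fun z : ℂ => z) 1 z := hasDerivAt_id z
    have h2 : ∀ i ∈ Finset.Icc 1 d, HasDerivAt (fun z : ℂ => a i / z ^ i)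
        (-((i:ℂ) * a i / z ^ (i+1))) z := by
      intro i hi
      have h3 := hasDerivAt_zpow (-(i:ℤ)) z (Or.inl hz0)
      have h4 := h3.const_mul (a i)
      have he : (fun z : ℂ => a i * z ^ (-(i:ℤ))) = fun z : ℂ => a i / z ^ i := by
        funext w
        rw [zpow_neg, zpow_natCast, div_eq_mul_inv]
      rw [he] at h4
      refine h4.congr_deriv ?_
      have hzp : z ^ (-(i:ℤ) - 1) = (z ^ (i+1))⁻¹ := by
        rw [show (-(i:ℤ) - 1) = -((i+1 : ℕ) : ℤ) by push_cast; ring, zpow_neg, zpow_natCast]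
      rw [hzp]
      have hzp2 : z ^ (i+1) ≠ 0 := pow_ne_zero _ hz0
      push_cast
      field_simp
    have h5 := h1.add (HasDerivAt.sum h2)
    convert h5 using 1
    · rfl
    · rfl
    · ext w
      simp [hgdef, Finset.sum_apply]
    rw [Finset.sum_neg_distrib]
    ring
  have hdiff : DifferentiableOn ℂ g Ω := fun z hz =>
    ((hD z hz).differentiableAt).differentiableWithinAt
  have hDne : ∀ z ∈ Ω, (1 - ∑ i ∈ Finset.Icc 1 d, (i:ℂ) * a i / z ^ (i+1)) ≠ 0 := by
    intro z hz
    have hnz := deriv_ne_zero_of_injOn' hΩ hinj hdiff hz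
    rwa [(hD z hz).deriv] at hnz
  set P : Polynomial ℂ := Polynomial.X ^ (d+1)
      - ∑ i ∈ Finset.Icc 1 d, Polynomial.C ((i:ℂ) * a i) * Polynomial.X ^ (d - i) with hPdef
  have hdegsum : (∑ i ∈ Finset.Icc 1 d,
      Polynomial.C ((i:ℂ) * a i) * Polynomial.X ^ (d - i)).degree < ((d+1 : ℕ) : WithBot ℕ) := by
    apply lt_of_le_of_lt (Polynomial.degree_sum_le _ _)
    rw [Finset.sup_lt_iff (by exact_mod_cast WithBot.bot_lt_coe (d+1))]
    intro i hi
    apply lt_of_le_of_lt (Polynomial.degree_C_mul_X_pow_le _ _)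
    exact_mod_cast Nat.cast_lt.mpr (by omega : d - i < d + 1)
  have hP : P.Monic := Polynomial.monic_X_pow_sub hdegsum
  have hPdegree : P.degree = (d+1 : ℕ) := by
    rw [hPdef, Polynomial.degree_sub_eq_left_of_degree_lt (by
      rwa [Polynomial.degree_X_pow]), Polynomial.degree_X_pow]
  have hPdeg : P.natDegree = d + 1 := Polynomial.natDegree_eq_of_degree_eq_some hPdegree
  have hc0 : P.coeff 0 = -((d:ℂ) * a d) := by
    rw [hPdef, Polynomial.coeff_sub, Polynomial.coeff_X_pow, Polynomial.finset_sum_coeff]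
    simp only [Polynomial.coeff_C_mul, Polynomial.coeff_X_pow]
    rw [Finset.sum_eq_single d]
    · simp [Nat.sub_self]
    · intro i hi hne
      have := Finset.mem_Icc.mp hi
      rw [if_neg (by omega)]
      ring
    · intro hnm
      exact absurd (Finset.mem_Icc.mpr ⟨hd, le_refl d⟩) hnm
  have heval : ∀ z : ℂ, z ≠ 0 → P.eval z
      = z ^ (d+1) * (1 - ∑ i ∈ Finset.Icc 1 d, (i:ℂ) * a i / z ^ (i+1)) := by
    intro z hz0
    rw [hPdef]
    simp only [Polynomial.eval_sub, Polynomial.eval_pow, Polynomial.eval_X,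
      Polynomial.eval_finset_sum, Polynomial.eval_mul, Polynomial.eval_C]
    rw [mul_sub, mul_one, Finset.mul_sum]
    congr 1
    apply Finset.sum_congr rfl
    intro i hi
    obtain ⟨hi1, hi2⟩ := Finset.mem_Icc.mp hi
    have hsub : d - i = (d+1) - (i+1) := by omega
    rw [hsub, pow_sub₀ z hz0 (by omega : i+1 ≤ d+1)]
    have hzp2 : z ^ (i+1) ≠ 0 := pow_ne_zero _ hz0
    field_simp
  have hroot : ∀ z ∈ P.roots, ‖z‖ ≤ 1 := by
    intro z hz
    by_contra hgt
    push_neg at hgt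
    have hzΩ : z ∈ Ω := hgt
    have hz0 : z ≠ 0 := by
      intro h
      rw [h] at hgt
      simp at hgt
      linarith
    have hPz : P.eval z = 0 := (Polynomial.mem_roots hP.ne_zero).mp hz
    rw [heval z hz0] at hPz
    rcases mul_eq_zero.mp hPz with h | h
    · exact hz0 (pow_eq_zero_iff (by omega) |>.mp h)
    · exact hDne z hzΩ h
  have hsplits := IsAlgClosed.splits P
  have hprod := hsplits.coeff_zero_eq_prod_roots_of_monic hP
  have habs : ‖P.coeff 0‖ = (P.roots.map (‖·‖)).prod := by
    rw [hprod]
    rw [norm_mul, norm_pow]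
    simpa [Multiset.map_map] using map_multiset_prod (normHom (α := ℂ)) P.roots
  have hle : (P.roots.map (‖·‖)).prod ≤ 1 := by
    apply multiset_prod_le_one_aux
    intro x hx
    obtain ⟨z, hz, rfl⟩ := Multiset.mem_map.mp hx
    exact ⟨norm_nonneg z, hroot z hz⟩
  have hfin : ‖(d:ℂ) * a d‖ ≤ 1 := by
    have h9 : ‖P.coeff 0‖ = ‖(d:ℂ) * a d‖ := by
      rw [hc0, norm_neg]
    rw [← h9, habs]
    exact hle
  calc (d : ℝ) * ‖a d‖ = ‖(d:ℂ) * a d‖ := by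
        rw [norm_mul, Complex.norm_natCast]
    _ ≤ 1 := hfin
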